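/- arXiv:2102.13486 — 9 statements merged into one kernel-verified Lean document; each statement's English description precedes it below -/
import Mathlib

section
/- If F is an order ideal of a vector lattice E having the b-property in E, then F is a band in E. -/
universe u

private lemma sup_mem_of_solid {E : Type u} [AddCommGroup E] [Lattice E]
    [CovariantClass E E (· + ·) (· ≤ ·)] [Module ℝ E]
    (F : Submodule ℝ E) (hsolid : ∀ x y : E, |y| ≤ |x| → x ∈ F → y ∈ F)
    {x y : E} (hx : x ∈ F) (hy : y ∈ F) : x ⊔ y ∈ F := by
  have habs : |x| + |y| ∈ F := F.add_mem (hsolid x |x| (by rw [abs_abs]) hx)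
    (hsolid y |y| (by rw [abs_abs]) hy)
  refine hsolid _ _ ?_ habs
  have h0 : (0:E) ≤ |x| + |y| := add_nonneg (abs_nonneg x) (abs_nonneg y)
  rw [abs_of_nonneg h0, abs_le']
  constructor
  · exact sup_le (le_trans (le_abs_self x) (le_add_of_nonneg_right (abs_nonneg y)))
      (le_trans (le_abs_self y) (le_add_of_nonneg_left (abs_nonneg x)))
  · calc -(x ⊔ y) = -x ⊓ -y := neg_sup x y
    _ ≤ -x := inf_le_left
    _ ≤ |x| := neg_le_abs x
    _ ≤ |x| + |y| := le_add_of_nonneg_right (abs_nonneg y)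

private lemma finset_sup'_mem_of_solid {E : Type u} [AddCommGroup E] [Lattice E]
    [CovariantClass E E (· + ·) (· ≤ ·)] [Module ℝ E]
    (F : Submodule ℝ E) (hsolid : ∀ x y : E, |y| ≤ |x| → x ∈ F → y ∈ F)
    (S : Finset E) (h : S.Nonempty) (hS : ∀ x ∈ S, x ∈ F) :
    S.sup' h id ∈ F := by
  induction h using Finset.Nonempty.cons_induction with
  | singleton a => simpa using hS a (by simp)
  | cons a s ha hs ih =>
    rw [Finset.sup'_cons hs]
    exact sup_mem_of_solid F hsolid (hS a (Finset.mem_cons_self a s))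
      (ih fun x hx => hS x (Finset.mem_cons_of_mem hx))

/-- An order ideal with the b-property in `E` is a band in `E`. -/
theorem order_ideal_with_b_property_is_band
    {E : Type u} [AddCommGroup E] [Lattice E]
    [CovariantClass E E (· + ·) (· ≤ ·)] [Module ℝ E]
    (arch : ∀ x y : E, (∀ n : ℕ, n • x ≤ y) → x ≤ 0)
    (F : Submodule ℝ E) (hsolid : ∀ x y : E, |y| ≤ |x| → x ∈ F → y ∈ F)
    (hb : ∀ (ι : Type u) [Preorder ι] [Nonempty ι] [IsDirected ι (· ≤ ·)]
      (x : ι → E), (∀ i, x i ∈ F) → (∀ i, 0 ≤ x i) → Monotone x →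
      (∃ e : E, ∀ i, x i ≤ e) → ∃ f ∈ F, ∀ i, x i ≤ f) :
    ∀ A : Set E, A ⊆ (F : Set E) → ∀ a : E, IsLUB A a → a ∈ F := by
  intro A hA a ha
  classical
  rcases A.eq_empty_or_nonempty with rfl | ⟨a₀, ha₀⟩
  · -- a is ≤ everything, hence a = 0
    have hub : ∀ b : E, a ≤ b := fun b => ha.2 (by simp [upperBounds])
    have h1 : a ≤ 0 := hub 0
    have h2 : (0:E) ≤ a := by
      have h := hub (a + a)
      have := add_le_add_left h (-a)
      simpa using this
    have : a = 0 := le_antisymm h1 h2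
    rw [this]; exact F.zero_mem
  · -- index type: finite subsets of A containing a₀
    set ι : Type u := {S : Finset E // ↑S ⊆ A ∧ a₀ ∈ S} with hι
    have hne : ∀ S : ι, S.1.Nonempty := fun S => ⟨a₀, S.2.2⟩
    haveI : Nonempty ι := ⟨⟨{a₀}, by simpa using ha₀, by simp⟩⟩
    haveI : IsDirected ι (· ≤ ·) := ⟨fun S T =>
      ⟨⟨S.1 ∪ T.1, by
          simp only [Finset.coe_union, Set.union_subset_iff]
          exact ⟨S.2.1, T.2.1⟩, Finset.mem_union_left _ S.2.2⟩,
        Finset.subset_union_left, Finset.subset_union_right⟩⟩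
    set x : ι → E := fun S => S.1.sup' (hne S) id - a₀ with hx
    have hmem : ∀ S : ι, x S ∈ F := fun S =>
      F.sub_mem (finset_sup'_mem_of_solid F hsolid S.1 (hne S)
        (fun y hy => hA (S.2.1 hy))) (hA ha₀)
    have hpos : ∀ S : ι, 0 ≤ x S := fun S =>
      sub_nonneg.mpr (Finset.le_sup' id S.2.2)
    have hmono : Monotone x := by
      intro S T hST
      apply sub_le_sub_right
      exact Finset.sup'_le _ _ fun y hy => Finset.le_sup' id (hST hy)
    have hbdd : ∃ e : E, ∀ S : ι, x S ≤ e := by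
      refine ⟨a - a₀, fun S => sub_le_sub_right ?_ a₀⟩
      exact Finset.sup'_le _ _ fun y hy => ha.1 (S.2.1 hy)
    obtain ⟨f, hfF, hf⟩ := hb ι x hmem hpos hmono hbdd
    -- f + a₀ is an upper bound of A
    have hub : a ≤ f + a₀ := by
      apply ha.2
      intro b hb'
      have : x ⟨{a₀, b}, by
          simp only [Finset.coe_insert, Finset.coe_singleton, Set.insert_subset_iff,
            Set.singleton_subset_iff]
          exact ⟨ha₀, hb'⟩, by simp⟩ ≤ f := hf _
      have hble : b ≤ ({a₀, b} : Finset E).sup' (by simp) id :=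
        Finset.le_sup' id (by simp)
      have := sub_le_iff_le_add.mp this
      exact hble.trans this
    have hf0 : (0:E) ≤ f := le_trans (hpos Classical.ofNonempty) (hf _)
    have hsub : a - a₀ ∈ F := by
      refine hsolid f (a - a₀) ?_ hfF
      rw [abs_of_nonneg (sub_nonneg.mpr (ha.1 ha₀)), abs_of_nonneg hf0]
      exact sub_le_iff_le_add.mpr hub
    have : a = (a - a₀) + a₀ := by abel
    rw [this]
    exact F.add_mem hsub (hA ha₀)
end

section
/- Every projection band F in a vector lattice E has the b-property in E. -/
universe u

/-- Every projection band `F` in a vector lattice `E` has the b-property in `E`. -/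
theorem projection_band_has_b_property
    {E : Type u} [AddCommGroup E] [Lattice E]
    [CovariantClass E E (· + ·) (· ≤ ·)] [Module ℝ E]
    (arch : ∀ x y : E, (∀ n : ℕ, n • x ≤ y) → x ≤ 0)
    (F : Submodule ℝ E) (hsolid : ∀ x y : E, |y| ≤ |x| → x ∈ F → y ∈ F)
    (hband : ∀ A : Set E, A ⊆ (F : Set E) → ∀ a : E, IsLUB A a → a ∈ F)
    (hproj : ∀ x : E, ∃ y ∈ F, ∃ z : E, (∀ f ∈ F, |z| ⊓ |f| = 0) ∧ x = y + z)
    {ι : Type u} [Preorder ι] [Nonempty ι] [IsDirected ι (· ≤ ·)]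
    (x : ι → E) (hxF : ∀ i, x i ∈ F) (hx0 : ∀ i, 0 ≤ x i) (hmono : Monotone x)
    (e : E) (hbdd : ∀ i, x i ≤ e) :
    ∃ f ∈ F, ∀ i, x i ≤ f := by
  haveI : CovariantClass E E (Function.swap (· + ·)) (· ≤ ·) :=
    ⟨fun a b c h => by simpa [add_comm] using add_le_add_left h a⟩
  obtain ⟨y, hyF, z, hz, he⟩ := hproj e
  refine ⟨y, hyF, fun i => ?_⟩
  -- w = (x i - y)⁺
  set w := (x i - y) ⊔ 0 with hw
  have hw0 : 0 ≤ w := le_sup_right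
  have habsw : |w| = w := abs_of_nonneg hw0
  -- x i - y ∈ F
  have hym : |y| ≤ |y| := le_refl _
  have hyabs : |y| ∈ F := hsolid y |y| (by rw [abs_abs]) hyF
  have hsumF : x i + |y| ∈ F := F.add_mem (hxF i) hyabs
  have hsub : |x i - y| ≤ (abs (x i + |y|)) := by
    have h3 : (0:E) ≤ x i + |y| := add_nonneg (hx0 i) (abs_nonneg y)
    rw [abs_of_nonneg h3]
    refine abs_le'.mpr ⟨?_, ?_⟩
    · rw [sub_eq_add_neg]
      exact add_le_add_right (neg_le_abs y) (x i)
    · rw [neg_sub]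
      calc y - x i ≤ |y| - x i := sub_le_sub_right (le_abs_self y) _
      _ ≤ |y| + x i := by
          rw [sub_eq_add_neg]
          exact add_le_add_right ((neg_nonpos.mpr (hx0 i)).trans (hx0 i)) _
      _ = x i + |y| := add_comm _ _
  have hdF : x i - y ∈ F := hsolid _ _ hsub hsumF
  have hwF : w ∈ F := hsolid _ _ (by rw [habsw]; exact sup_le (le_abs_self _) (abs_nonneg _)) hdF
  -- x i - y ≤ z, so w ≤ z ⊔ 0 ≤ |z|
  have hle : x i - y ≤ z := by
    have h := hbdd i
    rw [he] at h
    exact sub_le_iff_le_add'.mpr h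
  have hwz : w ≤ |z| := sup_le (hle.trans (le_abs_self z)) (abs_nonneg z)
  have : w ≤ 0 := by
    have h := hz w hwF
    calc w = w ⊓ w := (inf_idem w).symm
    _ ≤ |z| ⊓ |w| := inf_le_inf hwz (le_abs_self w)
    _ = 0 := h
  have hw0' : w = 0 := le_antisymm this hw0
  have hxy : x i - y ≤ 0 := hw0' ▸ (le_sup_left : x i - y ≤ w)
  exact sub_nonpos.mp hxy
end

section
/- Any sublattice F of a vector lattice E has the b-property in the order ideal I(F) generated by F in E. -/
universe u

/-- `A` has the b-property in `B`. -/
def HasBProp {X : Type u} [AddCommGroup X] [Lattice X] (A B : Set X) : Prop :=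
  ∀ (ι : Type u) [Preorder ι] [Nonempty ι] [IsDirected ι (· ≤ ·)] (x : ι → X),
    (∀ i, x i ∈ A) → (∀ i, 0 ≤ x i) → Monotone x →
    (∃ e ∈ B, ∀ i, x i ≤ e) → ∃ f ∈ A, ∀ i, x i ≤ f

/-- A sublattice `F` has the b-property in the order ideal `I(F)` generated by `F`. -/
theorem b_property_in_generated_ideal
    {E : Type u} [AddCommGroup E] [Lattice E]
    [CovariantClass E E (· + ·) (· ≤ ·)] [Module ℝ E]
    (arch : ∀ x y : E, (∀ n : ℕ, n • x ≤ y) → x ≤ 0)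
    (F : Submodule ℝ E) (hFlat : ∀ x ∈ F, ∀ y ∈ F, x ⊔ y ∈ F) :
    HasBProp (F : Set E) {x : E | ∃ f ∈ F, 0 ≤ f ∧ |x| ≤ f} := by
  rintro ι _ _ _ x hxF _ _ ⟨e, ⟨f, hfF, _, hef⟩, he⟩
  exact ⟨f, hfF, fun i => (he i).trans ((le_abs_self e).trans hef)⟩
end

section
/- Let F be an order dense sublattice of a vector lattice E. Then F has the b-property in E if and only if F is majorizing in E. -/
universe u

/-- For an order dense sublattice `F` of a vector lattice `E`, the b-property in `E`
is equivalent to `F` being majorizing in `E`. -/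
theorem order_dense_b_property_iff_majorizing
    {E : Type u} [AddCommGroup E] [Lattice E]
    [CovariantClass E E (· + ·) (· ≤ ·)] [Module ℝ E]
    (arch : ∀ x y : E, (∀ n : ℕ, n • x ≤ y) → x ≤ 0)
    (F : Submodule ℝ E) (hFlat : ∀ x ∈ F, ∀ y ∈ F, x ⊔ y ∈ F)
    (hdense : ∀ e : E, 0 < e → ∃ f ∈ F, 0 < f ∧ f ≤ e) :
    (∀ (ι : Type u) [Preorder ι] [Nonempty ι] [IsDirected ι (· ≤ ·)] (x : ι → E),
        (∀ i, x i ∈ F) → (∀ i, 0 ≤ x i) → Monotone x →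
        (∃ e : E, ∀ i, x i ≤ e) → ∃ f ∈ F, ∀ i, x i ≤ f)
      ↔ (∀ e : E, 0 ≤ e → ∃ f ∈ F, e ≤ f) := by
  constructor
  · -- b-property → majorizing
    intro hb e he
    -- the directed set D = {f ∈ F : 0 ≤ f ≤ e}
    set D := {f : E // f ∈ F ∧ 0 ≤ f ∧ f ≤ e} with hD
    haveI : Nonempty D := ⟨⟨0, F.zero_mem, le_refl 0, he⟩⟩
    letI : Preorder D := Subtype.preorder _
    haveI : IsDirected D (· ≤ ·) := ⟨fun a b =>
      ⟨⟨a.1 ⊔ b.1, hFlat _ a.2.1 _ b.2.1, le_trans a.2.2.1 le_sup_left,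
        sup_le a.2.2.2 b.2.2.2⟩, le_sup_left, le_sup_right⟩⟩
    obtain ⟨f, hfF, hf⟩ := hb D (fun d => d.1) (fun d => d.2.1) (fun d => d.2.2.1)
      (fun a b hab => hab) ⟨e, fun d => d.2.2.2⟩
    refine ⟨f, hfF, ?_⟩
    by_contra hef
    have hinf : e ⊓ f < e := lt_of_le_of_ne inf_le_left (fun h => hef (inf_eq_left.mp h))
    have hpos : (0:E) < e - e ⊓ f := sub_pos.mpr hinf
    obtain ⟨g, hgF, hg0, hge⟩ := hdense _ hpos
    have key : ∀ n : ℕ, n • g ≤ e := by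
      intro n
      induction n with
      | zero => simpa using he
      | succ n ih =>
        have hngF : n • g ∈ F := by
          have : (n : ℝ) • g ∈ F := F.smul_mem _ hgF
          rwa [Nat.cast_smul_eq_nsmul] at this
        have hng0 : (0:E) ≤ n • g := nsmul_nonneg hg0.le n
        have hnf : n • g ≤ f := hf ⟨n • g, hngF, hng0, ih⟩
        have : n • g + g ≤ e ⊓ f + (e - e ⊓ f) :=
          add_le_add (le_inf ih hnf) hge
        simpa [succ_nsmul] using this
    exact absurd (arch g e key) hg0.not_ge
  · -- majorizing → b-property
    intro hmaj ι _ _ _ x hxF hx0 hmono ⟨e, he⟩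
    obtain ⟨i⟩ := ‹Nonempty ι›
    obtain ⟨f, hfF, hef⟩ := hmaj e (le_trans (hx0 i) (he i))
    exact ⟨f, hfF, fun j => le_trans (he j) hef⟩
end

section
/- Let F be an order ideal of a locally solid vector lattice E(τ) having the b-property in E. Then F is uτ-closed in E if and only if F is τ-closed in E. -/
universe u

open Filter

/-- For an order ideal `F` with the b-property in a locally solid vector lattice
`E(τ)`, `F` is uτ-closed iff it is τ-closed. -/
theorem ideal_with_b_property_utau_closed_iff_tau_closed
    {E : Type u} [AddCommGroup E] [Lattice E]
    [CovariantClass E E (· + ·) (· ≤ ·)] [Module ℝ E]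
    [TopologicalSpace E] [IsTopologicalAddGroup E] [T2Space E]
    (hls : ∀ s ∈ nhds (0 : E), ∃ t ∈ nhds (0 : E), t ⊆ s ∧
      ∀ x y : E, |x| ≤ |y| → y ∈ t → x ∈ t)
    (F : Submodule ℝ E) (hsolid : ∀ x y : E, |y| ≤ |x| → x ∈ F → y ∈ F)
    (hb : ∀ (ι : Type u) [Preorder ι] [Nonempty ι] [IsDirected ι (· ≤ ·)]
      (x : ι → E), (∀ i, x i ∈ F) → (∀ i, 0 ≤ x i) → Monotone x →
      (∃ e : E, ∀ i, x i ≤ e) → ∃ f ∈ F, ∀ i, x i ≤ f) :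
    (∀ (ι : Type u) [Preorder ι] [Nonempty ι] [IsDirected ι (· ≤ ·)]
        (x : ι → E) (a : E), (∀ i, x i ∈ F) →
        (∀ u : E, 0 ≤ u → Tendsto (fun i => |x i - a| ⊓ u) atTop (nhds 0)) →
        a ∈ F)
      ↔ IsClosed (F : Set E) := by
  constructor
  · -- uτ-closed → τ-closed
    intro h
    apply isClosed_of_closure_subset
    intro b hbcl
    -- build the net
    let ι : Type u := (OrderDual {s : Set E // s ∈ nhds (0 : E)})
    haveI : Nonempty ι := ⟨OrderDual.toDual ⟨Set.univ, Filter.univ_mem⟩⟩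
    haveI : IsDirected ι (· ≤ ·) := by
      constructor
      intro s t
      exact ⟨OrderDual.toDual ⟨(OrderDual.ofDual s).1 ∩ (OrderDual.ofDual t).1,
        Filter.inter_mem (OrderDual.ofDual s).2 (OrderDual.ofDual t).2⟩,
        Set.inter_subset_left, Set.inter_subset_right⟩
    have hpre : ∀ s : ι, {y : E | y - b ∈ (OrderDual.ofDual s).1} ∈ nhds b := by
      intro s
      have hc : Tendsto (fun y : E => y - b) (nhds b) (nhds 0) :=
        (continuous_id.sub continuous_const).tendsto' b 0 (sub_self b)
      exact hc (OrderDual.ofDual s).2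
    have hnet : ∀ s : ι, ∃ y : E, y ∈ (F : Set E) ∧ y - b ∈ (OrderDual.ofDual s).1 := by
      intro s
      obtain ⟨y, hy1, hy2⟩ := (mem_closure_iff_nhds.mp hbcl) _ (hpre s)
      exact ⟨y, hy2, hy1⟩
    choose x hxF hxd using hnet
    apply h ι x b hxF
    intro u hu
    · 
      rw [Filter.tendsto_def]
      intro V hV
      obtain ⟨t, ht0, htV, htsolid⟩ := hls V hV
      rw [Filter.mem_atTop_sets]
      refine ⟨OrderDual.toDual ⟨t, ht0⟩, fun s hs => ?_⟩
      have hsub : (OrderDual.ofDual s).1 ⊆ t := hs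
      have hxt : x s - b ∈ t := hsub (hxd s)
      have h1 : |(|x s - b| ⊓ u)| ≤ |x s - b| := by
        rw [abs_of_nonneg (le_inf (abs_nonneg _) hu)]
        exact inf_le_left
      exact htV (htsolid _ _ (by simpa using h1) hxt)
  · -- τ-closed → uτ-closed
    intro hcl ι _ _ _ x a hxF hconv
    -- y i = |x i| ⊓ |a| ∈ F and y i →τ |a|
    have hyF : ∀ i, |x i| ⊓ |a| ∈ F := fun i =>
      hsolid (x i) (|x i| ⊓ |a|)
        (by rw [abs_of_nonneg (le_inf (abs_nonneg _) (abs_nonneg _))]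
            exact inf_le_left) (hxF i)
    have hy : Tendsto (fun i => |x i| ⊓ |a|) atTop (nhds |a|) := by
      have key : Tendsto (fun i => |x i| ⊓ |a| - |a|) atTop (nhds 0) := by
        rw [Filter.tendsto_def]
        intro V hV
        obtain ⟨t, ht0, htV, htsolid⟩ := hls V hV
        have hc := hconv |a| (abs_nonneg a)
        rw [Filter.tendsto_def] at hc
        have hct := hc t ht0
        rw [Filter.mem_atTop_sets] at hct ⊢
        obtain ⟨i0, hi0⟩ := hct
        refine ⟨i0, fun i hi => ?_⟩
        have hti : |x i - a| ⊓ |a| ∈ t := hi0 i hi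
        have hle : |(|x i| ⊓ |a| - |a|)| ≤ |(|x i - a| ⊓ |a|)| := by
          rw [abs_of_nonneg (le_inf (abs_nonneg _) (abs_nonneg _))]
          have h1 : |(|x i| ⊓ |a| - |a| ⊓ |a|)| ≤ |(|x i| - |a|)| :=
            abs_inf_sub_inf_le_abs _ _ _
          rw [inf_idem] at h1
          have h2 : |(|x i| - |a|)| ≤ |x i - a| := abs_abs_sub_abs_le _ _
          have h3 : |(|x i| ⊓ |a| - |a|)| ≤ |a| := by
            rw [abs_sub_comm, abs_of_nonneg (sub_nonneg.mpr inf_le_right)]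
            exact sub_le_self _ (le_inf (abs_nonneg _) (abs_nonneg _))
          exact le_inf (h1.trans h2) h3
        exact htV (htsolid _ _ hle hti)
      have := key.add (tendsto_const_nhds (x := |a|))
      simpa using this
    have habs : |a| ∈ F := by
      have : |a| ∈ closure (F : Set E) :=
        mem_closure_of_tendsto hy (Filter.Eventually.of_forall fun i => hyF i)
      rwa [hcl.closure_eq] at this
    exact hsolid _ _ (by simp [abs_abs]) habs
end

section
/- Let E be a Dedekind complete vector lattice with a weak order unit having the countable b-property in its universal completion E^u. Then E = E^u. -/
universe u

/-- A Dedekind complete vector lattice with a weak order unit having the countable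
b-property in its universal completion coincides with its universal completion. -/
theorem dedekind_complete_weak_unit_countable_b_property
    {E : Type u} {G : Type u}
    [AddCommGroup E] [Lattice E] [CovariantClass E E (· + ·) (· ≤ ·)] [Module ℝ E]
    [AddCommGroup G] [Lattice G] [CovariantClass G G (· + ·) (· ≤ ·)] [Module ℝ G]
    -- `E` is Dedekind complete
    (hDed : ∀ A : Set E, A.Nonempty → BddAbove A → ∃ s : E, IsLUB A s)
    -- `E` has a weak order unit
    (e : E) (he : 0 < e) (hweak : ∀ x : E, 0 ≤ x → x ⊓ e = 0 → x = 0)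
    -- `G` is a universal completion of `E`: Dedekind complete and laterally
    -- complete, containing `E` as an order dense sublattice via `J`
    (hGDed : ∀ A : Set G, A.Nonempty → BddAbove A → ∃ s : G, IsLUB A s)
    (hGlat : ∀ A : Set G, (∀ x ∈ A, 0 ≤ x) →
      (A.Pairwise fun x y => x ⊓ y = 0) → ∃ s : G, IsLUB A s)
    (J : E →ₗ[ℝ] G) (hJlat : ∀ x y : E, J (x ⊔ y) = J x ⊔ J y)
    (hJinj : Function.Injective J)
    (hdense : ∀ g : G, 0 < g → ∃ x : E, 0 < J x ∧ J x ≤ g)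
    -- countable b-property of `E` in `G`
    (hcb : ∀ x : ℕ → E, (∀ n, 0 ≤ x n) → Monotone x →
      (∃ g : G, ∀ n, J (x n) ≤ g) → ∃ u : E, ∀ n, x n ≤ u) :
    Function.Surjective J := by
  have hJ0 : J 0 = 0 := map_zero J
  -- J is monotone
  have mono : ∀ {x y : E}, x ≤ y → J x ≤ J y := by
    intro x y h
    calc J x ≤ J x ⊔ J y := le_sup_left
      _ = J y := by rw [← hJlat, sup_eq_right.mpr h]
  -- J reflects order
  have reflect : ∀ {x y : E}, J x ≤ J y → x ≤ y := by
    intro x y h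
    have : J (x ⊔ y) = J y := by rw [hJlat, sup_eq_right.mpr h]
    exact sup_eq_right.mp (hJinj this)
  -- nsmul is monotone in the argument
  have nsmul_mono : ∀ (n : ℕ) {a b : G}, a ≤ b → n • a ≤ n • b := by
    intro n a b h
    induction n with
    | zero => simp
    | succ n ih =>
      rw [succ_nsmul, succ_nsmul]
      exact add_le_add ih h
  -- G is Archimedean
  have arch : ∀ x g : G, (∀ n : ℕ, n • x ≤ g) → x ≤ 0 := by
    intro x g h
    obtain ⟨s, hs⟩ := hGDed (Set.range fun n : ℕ => n • x)
      ⟨0, ⟨0, by simp⟩⟩ ⟨g, by rintro _ ⟨n, rfl⟩; exact h n⟩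
    have hub : s ≤ s - x := by
      refine hs.2 ?_
      rintro _ ⟨n, rfl⟩
      rw [le_sub_iff_add_le]
      have := hs.1 ⟨n + 1, rfl⟩
      simpa [succ_nsmul] using this
    have : s + x ≤ s := by rwa [le_sub_iff_add_le] at hub
    exact (add_le_iff_nonpos_right _).mp this
  -- J preserves existing suprema
  have supPres : ∀ (A : Set E) (x : E), IsLUB A x → IsLUB (J '' A) (J x) := by
    intro A x hx
    constructor
    · rintro _ ⟨a, ha, rfl⟩
      exact mono (hx.1 ha)
    · intro b hb
      by_contra hnb
      have hlt : J x ⊓ b < J x :=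
        lt_of_le_of_ne inf_le_left (fun hh => hnb (inf_eq_left.mp hh))
      have hpos : 0 < J x - J x ⊓ b := sub_pos.mpr hlt
      obtain ⟨z, hz1, hz2⟩ := hdense _ hpos
      have hub : x - z ∈ upperBounds A := by
        intro a ha
        have h1 : J a ≤ J x ⊓ b := le_inf (mono (hx.1 ha)) (hb ⟨a, ha, rfl⟩)
        have h2 : J a ≤ J (x - z) := by
          rw [map_sub]
          calc J a ≤ J x ⊓ b := h1
            _ ≤ J x - J z := by
              rw [le_sub_iff_add_le, add_comm, ← le_sub_iff_add_le]
              exact hz2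
        exact reflect h2
      have hxx : x ≤ x - z := hx.2 hub
      have hz0 : z ≤ 0 := by
        have : x + z ≤ x := by rwa [le_sub_iff_add_le] at hxx
        exact (add_le_iff_nonpos_right _).mp this
      have : J z ≤ 0 := by
        have := mono hz0
        rwa [hJ0] at this
      exact absurd (lt_of_lt_of_le hz1 this) (lt_irrefl 0)
  -- each positive element of G is the sup of positive elements of E below it
  have densSup : ∀ h : G, 0 ≤ h → IsLUB (J '' {x : E | 0 ≤ x ∧ J x ≤ h}) h := by
    intro h h0
    constructor
    · rintro _ ⟨a, ⟨_, ha⟩, rfl⟩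
      exact ha
    · intro b hb
      by_contra hnb
      have hlt : h ⊓ b < h :=
        lt_of_le_of_ne inf_le_left (fun hh => hnb (inf_eq_left.mp hh))
      have hpos : 0 < h - h ⊓ b := sub_pos.mpr hlt
      obtain ⟨z, hz1, hz2⟩ := hdense _ hpos
      have hz0 : 0 ≤ z := reflect (by rw [hJ0]; exact le_of_lt hz1)
      have key : ∀ n : ℕ, n • J z ≤ h := by
        intro n
        induction n with
        | zero => simpa using h0
        | succ n ih =>
          have hmem : J (n • z) ∈ J '' {x : E | 0 ≤ x ∧ J x ≤ h} :=
            ⟨n • z, ⟨nsmul_nonneg hz0 n, by rw [map_nsmul]; exact ih⟩, rfl⟩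
          have h1 : n • J z ≤ b := by
            have := hb hmem
            rwa [map_nsmul] at this
          have h2 : n • J z ≤ h ⊓ b := le_inf ih h1
          calc (n + 1) • J z = n • J z + J z := succ_nsmul _ n
            _ ≤ (h ⊓ b) + (h - h ⊓ b) := add_le_add h2 hz2
            _ = h := by abel
      have : J z ≤ 0 := arch _ _ key
      exact absurd (lt_of_lt_of_le hz1 this) (lt_irrefl 0)
  -- E is an ideal in G
  have ideal : ∀ h : G, 0 ≤ h → (∃ y : E, h ≤ J y) → ∃ x : E, 0 ≤ x ∧ J x = h := by
    rintro h h0 ⟨y, hy⟩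
    have hA0 : (0 : E) ∈ {x : E | 0 ≤ x ∧ J x ≤ h} := ⟨le_refl 0, by rw [hJ0]; exact h0⟩
    have hbdd : BddAbove {x : E | 0 ≤ x ∧ J x ≤ h} :=
      ⟨y, fun a ha => reflect (le_trans ha.2 hy)⟩
    obtain ⟨s, hs⟩ := hDed _ ⟨0, hA0⟩ hbdd
    exact ⟨s, hs.1 hA0, (supPres _ s hs).unique (densSup h h0)⟩
  have hJe : (0 : G) ≤ J e := by
    have := mono (le_of_lt he)
    rwa [hJ0] at this
  -- J preserves infima
  have Jinf : ∀ x y : E, J (x ⊓ y) = J x ⊓ J y := by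
    intro x y
    have h1 : x ⊓ y = x + y - (x ⊔ y) := by
      rw [← inf_add_sup x y]; abel
    rw [h1, map_sub, map_add, hJlat]
    rw [← inf_add_sup (J x) (J y)]; abel
  -- J e is a weak unit in G
  have weakG : ∀ h : G, 0 ≤ h → h ⊓ J e = 0 → h = 0 := by
    intro h h0 hinf
    by_contra hne
    have hpos : 0 < h := lt_of_le_of_ne h0 (Ne.symm hne)
    obtain ⟨z, hz1, hz2⟩ := hdense h hpos
    have hz0 : 0 ≤ z := reflect (by rw [hJ0]; exact le_of_lt hz1)
    have hJz0 : (0 : G) ≤ J z := le_of_lt hz1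
    have hze : J (z ⊓ e) = 0 := by
      rw [Jinf]
      exact le_antisymm (le_trans (inf_le_inf_right _ hz2) (le_of_eq hinf))
        (le_inf hJz0 hJe)
    have : z ⊓ e = 0 := hJinj (by rw [hze, hJ0])
    have hzz : z = 0 := hweak z hz0 this
    rw [hzz, hJ0] at hz1
    exact lt_irrefl 0 hz1
  -- surjectivity on nonnegative elements
  have posSurj : ∀ g : G, 0 ≤ g → ∃ x : E, J x = g := by
    intro g hg
    have hx : ∀ n : ℕ, ∃ x : E, 0 ≤ x ∧ J x = g ⊓ n • J e := fun n =>
      ideal _ (le_inf hg (nsmul_nonneg hJe n))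
        ⟨n • e, by rw [map_nsmul]; exact inf_le_right⟩
    choose x hx0 hxJ using hx
    have hmonoS : Monotone x := by
      apply monotone_nat_of_le_succ
      intro n
      refine reflect ?_
      rw [hxJ n, hxJ (n + 1)]
      refine inf_le_inf_left g ?_
      rw [succ_nsmul]
      simpa using add_le_add_left hJe (n • J e)
    obtain ⟨u, hu⟩ := hcb x hx0 hmonoS ⟨g, fun n => (hxJ n) ▸ inf_le_left⟩
    obtain ⟨s, hs⟩ := hDed (Set.range x) ⟨x 0, ⟨0, rfl⟩⟩
      ⟨u, by rintro _ ⟨n, rfl⟩; exact hu n⟩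
    refine ⟨s, ?_⟩
    have h1 : IsLUB (J '' Set.range x) (J s) := supPres _ _ hs
    have h2 : IsLUB (J '' Set.range x) g := by
      constructor
      · rintro _ ⟨_, ⟨n, rfl⟩, rfl⟩
        rw [hxJ n]
        exact inf_le_left
      · intro b hb
        have hcb' : ∀ n : ℕ, g ⊓ n • J e ≤ g ⊓ b := fun n =>
          le_inf inf_le_left (by
            have := hb ⟨x n, ⟨n, rfl⟩, rfl⟩
            rwa [hxJ n] at this)
        have htle : (g - g ⊓ b) ⊓ J e ≤ J e := inf_le_right
        have key : ∀ n : ℕ, n • ((g - g ⊓ b) ⊓ J e) ≤ g ⊓ n • J e := by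
          intro n
          induction n with
          | zero => simpa using le_inf hg (le_refl (0 : G))
          | succ n ih =>
            have h3 : (g - g ⊓ b) ⊓ J e ≤ g - (g ⊓ n • J e) :=
              le_trans inf_le_left (sub_le_sub_left (hcb' n) g)
            have h4 : (n + 1) • ((g - g ⊓ b) ⊓ J e) ≤ g := by
              calc (n + 1) • ((g - g ⊓ b) ⊓ J e)
                  = n • ((g - g ⊓ b) ⊓ J e) + (g - g ⊓ b) ⊓ J e := succ_nsmul _ n
                _ ≤ (g ⊓ n • J e) + (g - (g ⊓ n • J e)) := add_le_add ih h3
                _ = g := by abel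
            have h5 : (n + 1) • ((g - g ⊓ b) ⊓ J e) ≤ (n + 1) • J e :=
              nsmul_mono (n + 1) htle
            exact le_inf h4 h5
        have ht1 : (g - g ⊓ b) ⊓ J e ≤ 0 :=
          arch _ g (fun n => le_trans (key n) inf_le_left)
        have ht0 : (0 : G) ≤ (g - g ⊓ b) ⊓ J e :=
          le_inf (sub_nonneg.mpr inf_le_left) hJe
        have hd0 : g - g ⊓ b = 0 :=
          weakG _ (sub_nonneg.mpr inf_le_left) (le_antisymm ht1 ht0)
        have : g = g ⊓ b := by
          have := sub_eq_zero.mp hd0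
          exact this
        calc g = g ⊓ b := this
          _ ≤ b := inf_le_right
    exact h1.unique h2
  -- general case
  intro g
  obtain ⟨a, ha⟩ := posSurj (g ⊔ 0) le_sup_right
  obtain ⟨b, hb⟩ := posSurj ((-g) ⊔ 0) le_sup_right
  refine ⟨a - b, ?_⟩
  rw [map_sub, ha, hb, sub_eq_add_neg, neg_sup, neg_neg, neg_zero, add_comm,
    inf_add_sup, add_zero]
end

section
/- Let E(τ) be a locally solid vector lattice whose order intervals are τ-complete. If E has the b-property in its topological completion Ê(τ̂), then E is topologically complete, i.e., E = Ê. -/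
universe u

open Filter Topology



lemma solid_tendsto_aux {G : Type*} [AddCommGroup G] [Lattice G]
    [UniformSpace G] [IsUniformAddGroup G]
    (hlsG : ∀ s ∈ nhds (0 : G), ∃ t ∈ nhds (0 : G), t ⊆ s ∧
      ∀ x y : G, |x| ≤ |y| → y ∈ t → x ∈ t)
    {α : Type*} {l : Filter α} {u v : α → G} {g h : G}
    (hu : Tendsto u l (𝓝 g)) (hcomp : ∀ x, |v x - h| ≤ |u x - g|) :
    Tendsto v l (𝓝 h) := by
  rw [← tendsto_sub_nhds_zero_iff] at hu ⊢
  intro s hs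
  obtain ⟨t, ht, hts, hsolid⟩ := hlsG s hs
  have := hu ht
  rw [mem_map] at this ⊢
  filter_upwards [this] with x hx
  exact hts (hsolid _ _ (hcomp x) hx)


/-- A locally solid vector lattice with τ-complete order intervals which has the
b-property in its topological completion is itself complete, i.e. `E = Ê`. -/
theorem complete_of_b_property_in_completion
    {E : Type u} {G : Type u}
    [AddCommGroup E] [Lattice E] [CovariantClass E E (· + ·) (· ≤ ·)] [Module ℝ E]
    [AddCommGroup G] [Lattice G] [CovariantClass G G (· + ·) (· ≤ ·)] [Module ℝ G]
    [UniformSpace E] [IsUniformAddGroup E] [T2Space E]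
    [UniformSpace G] [IsUniformAddGroup G] [T2Space G] [CompleteSpace G]
    -- `E(τ)` and `Ê(τ̂)` are locally solid
    (hls : ∀ s ∈ nhds (0 : E), ∃ t ∈ nhds (0 : E), t ⊆ s ∧
      ∀ x y : E, |x| ≤ |y| → y ∈ t → x ∈ t)
    (hlsG : ∀ s ∈ nhds (0 : G), ∃ t ∈ nhds (0 : G), t ⊆ s ∧
      ∀ x y : G, |x| ≤ |y| → y ∈ t → x ∈ t)
    -- order intervals of `E` are τ-complete
    (hint : ∀ a b : E, IsComplete (Set.Icc a b))
    -- `G` is the topological completion of `E`: `J` is a uniform embedding with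
    -- dense (and order dense) range
    (J : E →ₗ[ℝ] G) (hJlat : ∀ x y : E, J (x ⊔ y) = J x ⊔ J y)
    (hJemb : IsUniformInducing J) (hJdenseTop : DenseRange J)
    (hJorderdense : ∀ g : G, 0 < g → ∃ x : E, 0 < J x ∧ J x ≤ g)
    -- `E` has the b-property in `Ê`
    (hb : ∀ (ι : Type u) [Preorder ι] [Nonempty ι] [IsDirected ι (· ≤ ·)]
      (x : ι → E), (∀ i, 0 ≤ x i) → Monotone x →
      (∃ g : G, ∀ i, J (x i) ≤ g) → ∃ e : E, ∀ i, x i ≤ e) :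
    Function.Surjective J := by
  -- basic facts about J
  have hJmono : Monotone J := by
    intro x y hxy
    have : J y = J x ⊔ J y := by rw [← hJlat, sup_eq_right.mpr hxy]
    exact le_sup_left.trans this.ge
  have hJinj : Function.Injective J := by
    intro x y hxy
    have h1 : Inseparable (J x) (J y) := by rw [hxy]
    have h2 : Inseparable x y := (hJemb.isInducing.inseparable_iff).mp h1
    exact h2.eq
  have hJinf : ∀ x y : E, J (x ⊓ y) = J x ⊓ J y := by
    intro x y
    have h1 : x ⊓ y = x + y - x ⊔ y := by
      rw [eq_sub_iff_add_eq, inf_add_sup]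
    have h2 : (J x) ⊓ (J y) = J x + J y - J x ⊔ J y := by
      rw [eq_sub_iff_add_eq, inf_add_sup]
    rw [h1, h2, map_sub, map_add, hJlat]
  -- main step: every nonnegative element of `G` is in the range
  have key : ∀ g : G, 0 ≤ g → ∃ y : E, 0 ≤ y ∧ J y = g := by
    intro g hg
    -- the directed family of elements of `E` dominated by `g`
    set D := {x : E // 0 ≤ x ∧ J x ≤ g} with hD
    have hne : Nonempty D := ⟨⟨0, le_refl 0, by rw [map_zero]; exact hg⟩⟩
    have hdir : IsDirected D (· ≤ ·) := by
      constructor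
      rintro ⟨a, ha0, hag⟩ ⟨b, hb0, hbg⟩
      exact ⟨⟨a ⊔ b, le_sup_of_le_left ha0, by rw [hJlat]; exact sup_le hag hbg⟩,
        le_sup_left, le_sup_right⟩
    obtain ⟨e, he⟩ := hb D (fun i => i.1) (fun i => i.2.1) (fun _ _ h => h)
      ⟨g, fun i => i.2.2⟩
    have he0 : 0 ≤ e := he ⟨0, le_refl 0, by rw [map_zero]; exact hg⟩
    -- the truncation map
    set f : E → E := fun x => (x ⊔ 0) ⊓ e with hf
    have hJf : ∀ x, J (f x) = (J x ⊔ 0) ⊓ J e := by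
      intro x
      rw [hf]
      simp only [hJinf, hJlat, map_zero]
    -- approximating filter
    set F : Filter E := comap J (𝓝 g) with hF
    have hFne : NeBot F := (IsDenseInducing.mk hJemb.isInducing hJdenseTop).comap_nhds_neBot g
    have htend : Tendsto (fun x => J (f x)) F (𝓝 (g ⊓ J e)) := by
      apply solid_tendsto_aux hlsG (u := fun x => J x) (g := g) tendsto_comap
      intro x
      have h1 : g ⊓ J e = (g ⊔ 0) ⊓ J e := by rw [sup_of_le_left hg]
      rw [hJf, h1]
      calc |(J x ⊔ 0) ⊓ J e - (g ⊔ 0) ⊓ J e| ≤ |J x ⊔ 0 - g ⊔ 0| :=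
              abs_inf_sub_inf_le_abs _ _ _
        _ ≤ |J x - g| := abs_sup_sub_sup_le_abs _ _ _
    -- the truncated filter is Cauchy in `E` and lives in `[0, e]`
    have hC : Cauchy (map f F) := by
      rw [← hJemb.cauchy_map_iff]
      have : map J (map f F) = map (fun x => J (f x)) F := by
        rw [map_map]; rfl
      rw [this]
      exact htend.cauchy_map
    have hsub : map f F ≤ 𝓟 (Set.Icc 0 e) := by
      rw [le_principal_iff, mem_map]
      apply univ_mem'
      intro x
      exact ⟨le_inf le_sup_right he0, inf_le_right⟩
    obtain ⟨y, hyIcc, hy⟩ := hint 0 e (map f F) hC hsub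
    have hymap : Tendsto J (map f F) (𝓝 (J y)) :=
      (hJemb.uniformContinuous.continuous.tendsto y).mono_left hy
    have hNeBot : NeBot (map f F) := map_neBot
    have hJy : J y = g ⊓ J e := by
      have h2 : Tendsto J (map f F) (𝓝 (g ⊓ J e)) := by
        rw [tendsto_map'_iff]; exact htend
      exact tendsto_nhds_unique hymap h2
    refine ⟨y, hyIcc.1, ?_⟩
    -- now show `J y = g`
    by_contra hne'
    have hJyg : J y ≤ g := hJy.le.trans inf_le_left
    have hpos : 0 < g - J y := sub_pos.mpr (lt_of_le_of_ne hJyg hne')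
    obtain ⟨z, hz0, hzle⟩ := hJorderdense _ hpos
    have hz0' : 0 ≤ z := by
      have : J (z ⊔ 0) = J z := by rw [hJlat, map_zero, sup_of_le_left hz0.le]
      have := hJinj this
      exact sup_eq_left.mp this
    have hmem : (0 : E) ≤ y + z ∧ J (y + z) ≤ g := by
      constructor
      · exact add_nonneg hyIcc.1 hz0'
      · rw [map_add]
        calc J y + J z ≤ J y + (g - J y) := add_le_add_right hzle _
          _ = g := by abel
    have hle : y + z ≤ e := he ⟨y + z, hmem⟩
    have h1 : J y + J z ≤ J e := by
      have := hJmono hle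
      rwa [map_add] at this
    have h2 : J y + J z ≤ g := hmem.2.trans_eq' (map_add J y z)
    have h3 : J y + J z ≤ J y := by
      calc J y + J z ≤ g ⊓ J e := le_inf h2 h1
        _ = J y := hJy.symm
    exact absurd ((add_le_iff_nonpos_right _).mp h3) hz0.not_ge
  -- conclude for arbitrary `g` via the decomposition `g = g⁺ - g⁻`
  intro g
  obtain ⟨y₁, _, hy₁⟩ := key (g ⊔ 0) le_sup_right
  obtain ⟨y₂, _, hy₂⟩ := key (-g ⊔ 0) le_sup_right
  refine ⟨y₁ - y₂, ?_⟩
  rw [map_sub, hy₁, hy₂, ← posPart_def, ← negPart_def, posPart_sub_negPart]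
end

section
/- Let F be an order dense and majorizing sublattice of an order complete vector lattice E. Then every increasing net in F⁺ that is order bounded in E is uo-Cauchy in F. -/
universe u

/-- The net `z` order converges to `0` relatively to the sublattice `F`:
there is a decreasing net in `F` whose infimum (computed relative to `F`) is `0`
and which eventually dominates `|z|`. -/
def OrderConvZeroIn {E : Type u} [AddCommGroup E] [Lattice E] (F : Set E)
    {κ : Type u} [Preorder κ] (z : κ → E) : Prop :=
  ∃ (β : Type u) (pβ : Preorder β) (y : β → E),
    Nonempty β ∧
    (∀ b₁ b₂ : β, ∃ b₃ : β, pβ.le b₁ b₃ ∧ pβ.le b₂ b₃) ∧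
    (∀ b, y b ∈ F) ∧
    (∀ b₁ b₂ : β, pβ.le b₁ b₂ → y b₂ ≤ y b₁) ∧
    (∀ b, 0 ≤ y b) ∧
    (∀ l ∈ F, (∀ b, l ≤ y b) → l ≤ 0) ∧
    (∀ b, ∃ k₀ : κ, ∀ k ≥ k₀, |z k| ≤ y b)

/-- In an order complete vector lattice `E`, every increasing order bounded net in
an order dense majorizing sublattice `F` is uo-Cauchy in `F`. -/
theorem increasing_b_bounded_net_uo_cauchy
    {E : Type u} [AddCommGroup E] [Lattice E]
    [CovariantClass E E (· + ·) (· ≤ ·)] [Module ℝ E]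
    -- `E` is order complete
    (hDed : ∀ A : Set E, A.Nonempty → BddAbove A → ∃ s : E, IsLUB A s)
    (F : Submodule ℝ E) (hFlat : ∀ x ∈ F, ∀ y ∈ F, x ⊔ y ∈ F)
    (hdense : ∀ e : E, 0 < e → ∃ f ∈ F, 0 < f ∧ f ≤ e)
    (hmaj : ∀ e : E, 0 ≤ e → ∃ f ∈ F, e ≤ f)
    {ι : Type u} [Preorder ι] [Nonempty ι] [IsDirected ι (· ≤ ·)]
    (x : ι → E) (hxF : ∀ i, x i ∈ F) (hx0 : ∀ i, 0 ≤ x i) (hmono : Monotone x)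
    (e : E) (hbdd : ∀ i, x i ≤ e) :
    ∀ u ∈ F, 0 ≤ u →
      OrderConvZeroIn (F : Set E) (fun p : ι × ι => |x p.1 - x p.2| ⊓ u) := by
  intro u huF hu0
  -- the supremum of the net
  obtain ⟨s, hs⟩ := hDed (Set.range x) (Set.range_nonempty x)
    ⟨e, by rintro _ ⟨i, rfl⟩; exact hbdd i⟩
  have hxs : ∀ i, x i ≤ s := fun i => hs.1 ⟨i, rfl⟩
  have hs0 : 0 ≤ s := le_trans (hx0 (Classical.arbitrary ι)) (hxs _)
  -- Archimedean property from order completeness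
  have arch : ∀ a c : E, (∀ n : ℕ, n • a ≤ c) → a ≤ 0 := by
    intro a c h
    obtain ⟨t, ht⟩ := hDed (Set.range (fun n : ℕ => n • a))
      ⟨0, ⟨0, by simp⟩⟩ ⟨c, by rintro _ ⟨n, rfl⟩; exact h n⟩
    have h1 : ∀ n : ℕ, n • a ≤ t - a := by
      intro n
      have h2 : (n + 1) • a ≤ t := ht.1 ⟨n + 1, rfl⟩
      rw [succ_nsmul] at h2
      exact le_sub_iff_add_le.mpr h2
    have h2 : t ≤ t - a := ht.2 (by rintro _ ⟨n, rfl⟩; exact h1 n)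
    have := sub_nonneg.mpr h2
    -- t - a - t = -a ≥ 0
    simpa using this
  -- inf closure of F
  have hFinf : ∀ a ∈ F, ∀ b ∈ F, a ⊓ b ∈ (F : Set E) := by
    intro a ha b hb
    have : a ⊓ b = -((-a) ⊔ (-b)) := by rw [← neg_inf, neg_neg]
    rw [this]
    exact F.neg_mem (hFlat _ (F.neg_mem ha) _ (F.neg_mem hb))
  -- the index type
  let D : Type u := {f : E // f ∈ F ∧ s ≤ f}
  refine ⟨ι × Dᵒᵈ, inferInstance, fun b => ((OrderDual.ofDual b.2 : D).1 - x b.1) ⊓ u,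
    ?_, ?_, ?_, ?_, ?_, ?_, ?_⟩
  · obtain ⟨f, hfF, hsf⟩ := hmaj s hs0
    exact ⟨Classical.arbitrary ι, OrderDual.toDual ⟨f, hfF, hsf⟩⟩
  · rintro ⟨k₁, f₁⟩ ⟨k₂, f₂⟩
    obtain ⟨k₃, hk₁, hk₂⟩ := directed_of (· ≤ ·) k₁ k₂
    set g₁ := OrderDual.ofDual f₁
    set g₂ := OrderDual.ofDual f₂
    have hg : g₁.1 ⊓ g₂.1 ∈ F := hFinf _ g₁.2.1 _ g₂.2.1
    refine ⟨⟨k₃, OrderDual.toDual ⟨g₁.1 ⊓ g₂.1, hg, le_inf g₁.2.2 g₂.2.2⟩⟩,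
      ⟨hk₁, ?_⟩, ⟨hk₂, ?_⟩⟩
    · exact inf_le_left
    · exact inf_le_right
  · rintro ⟨k, f⟩
    exact hFinf _ (F.sub_mem (OrderDual.ofDual f).2.1 (hxF k)) _ huF
  · rintro ⟨k₁, f₁⟩ ⟨k₂, f₂⟩ ⟨hk, hf⟩
    have : (OrderDual.ofDual f₂ : D).1 - x k₂ ≤ (OrderDual.ofDual f₁ : D).1 - x k₁ :=
      sub_le_sub hf (hmono hk)
    exact inf_le_inf_right u this
  · rintro ⟨k, f⟩
    have : (0 : E) ≤ (OrderDual.ofDual f : D).1 - x k :=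
      sub_nonneg.mpr (le_trans (hxs k) (OrderDual.ofDual f : D).2.2)
    exact le_inf this hu0
  · -- the infimum-zero condition
    intro l hlF hl
    -- for f ∈ D : s ≤ f - l
    have key : ∀ f : E, f ∈ F → s ≤ f → (f - (l ⊔ 0) ∈ F ∧ s ≤ f - (l ⊔ 0)) := by
      intro f hfF hsf
      have h1 : ∀ k, l ≤ f - x k := by
        intro k
        have := hl ⟨k, OrderDual.toDual ⟨f, hfF, hsf⟩⟩
        exact le_trans this inf_le_left
      have h2 : s ≤ f - l := by
        apply hs.2
        rintro _ ⟨k, rfl⟩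
        have := h1 k
        rw [le_sub_iff_add_le] at this ⊢
        rwa [add_comm] at this
      refine ⟨F.sub_mem hfF (hFlat _ hlF _ F.zero_mem), ?_⟩
      rw [sub_sup]
      exact le_inf h2 (by simpa using hsf)
    obtain ⟨f₀, hf₀F, hsf₀⟩ := hmaj s hs0
    have iter : ∀ n : ℕ, (f₀ - n • (l ⊔ 0) ∈ F ∧ s ≤ f₀ - n • (l ⊔ 0)) := by
      intro n
      induction n with
      | zero => simpa using ⟨hf₀F, hsf₀⟩
      | succ n ih =>
        have := key _ ih.1 ih.2
        rwa [sub_sub, ← succ_nsmul] at this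
    have hbound : ∀ n : ℕ, n • (l ⊔ 0) ≤ f₀ - s := by
      intro n
      have := (iter n).2
      rw [le_sub_iff_add_le] at this
      rw [← sub_nonneg] at this ⊢
      have h := this
      abel_nf at h ⊢
      exact h
    have hle : l ⊔ 0 ≤ 0 := arch _ _ hbound
    exact le_trans le_sup_left hle
  · rintro ⟨k, f⟩
    refine ⟨(k, k), ?_⟩
    rintro ⟨i, j⟩ ⟨hik, hjk⟩
    have hz0 : (0 : E) ≤ |x i - x j| ⊓ u := le_inf (abs_nonneg _) hu0
    rw [abs_of_nonneg hz0]
    refine inf_le_inf_right u ?_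
    rw [abs_sub_comm, ← sup_sub_inf_eq_abs_sub]
    have h2 : x i ⊔ x j ≤ (OrderDual.ofDual f : D).1 :=
      sup_le (le_trans (hxs i) (OrderDual.ofDual f : D).2.2)
        (le_trans (hxs j) (OrderDual.ofDual f : D).2.2)
    have h3 : x k ≤ x i ⊓ x j := le_inf (hmono hik) (hmono hjk)
    exact sub_le_sub h2 h3
end

section
/- Every uo-closed sublattice F of a Dedekind complete vector lattice E has the b-property in E. -/
universe u

/-- The net `z` order converges to `0` in `E`. -/
def OrderConvZero {E : Type u} [AddCommGroup E] [Lattice E]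
    {κ : Type u} [Preorder κ] (z : κ → E) : Prop :=
  ∃ (β : Type u) (pβ : Preorder β) (y : β → E),
    Nonempty β ∧
    (∀ b₁ b₂ : β, ∃ b₃ : β, pβ.le b₁ b₃ ∧ pβ.le b₂ b₃) ∧
    (∀ b₁ b₂ : β, pβ.le b₁ b₂ → y b₂ ≤ y b₁) ∧
    IsGLB (Set.range y) 0 ∧
    (∀ b, ∃ k₀ : κ, ∀ k ≥ k₀, |z k| ≤ y b)

/-- The net `x` uo-converges to `a` in `E`. -/
def UoTendsto {E : Type u} [AddCommGroup E] [Lattice E]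
    {κ : Type u} [Preorder κ] (x : κ → E) (a : E) : Prop :=
  ∀ u : E, 0 ≤ u → OrderConvZero (fun k => |x k - a| ⊓ u)

/-- Every uo-closed sublattice of a Dedekind complete vector lattice has the
b-property. -/
theorem uo_closed_sublattice_has_b_property
    {E : Type u} [AddCommGroup E] [Lattice E]
    [CovariantClass E E (· + ·) (· ≤ ·)] [Module ℝ E]
    (hDed : ∀ A : Set E, A.Nonempty → BddAbove A → ∃ s : E, IsLUB A s)
    (F : Submodule ℝ E) (hFlat : ∀ x ∈ F, ∀ y ∈ F, x ⊔ y ∈ F)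
    -- `F` is uo-closed in `E`
    (huoc : ∀ (κ : Type u) [Preorder κ] [Nonempty κ] [IsDirected κ (· ≤ ·)]
      (z : κ → E) (a : E), (∀ k, z k ∈ F) → UoTendsto z a → a ∈ F)
    {ι : Type u} [Preorder ι] [Nonempty ι] [IsDirected ι (· ≤ ·)]
    (x : ι → E) (hxF : ∀ i, x i ∈ F) (hx0 : ∀ i, 0 ≤ x i) (hmono : Monotone x)
    (e : E) (hbdd : ∀ i, x i ≤ e) :
    ∃ f ∈ F, ∀ i, x i ≤ f := by
  obtain ⟨s, hs⟩ := hDed (Set.range x) (Set.range_nonempty x)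
    ⟨e, by rintro _ ⟨i, rfl⟩; exact hbdd i⟩
  have hxs : ∀ i, x i ≤ s := fun i => hs.1 ⟨i, rfl⟩
  have huo : UoTendsto x s := by
    intro u hu
    refine ⟨ι, inferInstance, fun b => (s - x b) ⊓ u, ‹Nonempty ι›, ?_, ?_, ?_, ?_⟩
    · intro b₁ b₂; exact directed_of (· ≤ ·) b₁ b₂
    · intro b₁ b₂ h
      exact inf_le_inf_right u (sub_le_sub_left (hmono h) s)
    · constructor
      · rintro _ ⟨b, rfl⟩; exact le_inf (sub_nonneg.2 (hxs b)) hu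
      · intro c hc
        have h1 : ∀ b, x b ≤ s - c := fun b =>
          le_sub_comm.mp (le_trans (hc ⟨b, rfl⟩) inf_le_left)
        have h2 : s ≤ s - c := hs.2 (by rintro _ ⟨b, rfl⟩; exact h1 b)
        have := sub_le_sub_left h2 s
        simpa using this
    · intro b
      refine ⟨b, fun k hk => ?_⟩
      have hz : (0:E) ≤ |x k - s| ⊓ u :=
        le_inf (abs_nonneg _) hu
      rw [abs_of_nonneg hz]
      have habs : |x k - s| = s - x k := by
        rw [abs_sub_comm, abs_of_nonneg (sub_nonneg.2 (hxs k))]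
      rw [habs]
      exact inf_le_inf_right u (sub_le_sub_left (hmono hk) s)
  exact ⟨s, huoc ι x s hxF huo, hxs⟩
end
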